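/- With the setup below, the subgroup S of PSL(2, k) acts freely on the projective line PG(1, k) and has exactly two orbits on PG(1, k), each of size (k+1)/2; moreover the point ∞ is not contained in the S-orbit containing 0. -/

import Mathlib

open Matrix
open scoped MatrixGroups

namespace Paper6

variable {F : Type*} [Field F]

/-- The natural projection `SL(2, F) → PSL(2, F)`. -/
def pr (F : Type*) [Field F] : SL(2, F) →* PSL(2, F) := QuotientGroup.mk' _

/-- The element `s(a, b)`, i.e. the image of `[[a, b], [bθ, a]]`, in `SL(2, F)`,
where `a ^ 2 - b ^ 2 * θ = 1`. -/
def smat (θ a b : F) (h : a ^ 2 - b ^ 2 * θ = 1) : SL(2, F) :=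
  ⟨!![a, b; b * θ, a], by rw [Matrix.det_fin_two_of]; linear_combination h⟩

/-- The natural (Möbius) action of `SL(2, F)` on the projective line `PG(1, F)`,
realized as the projectivization of `F²`. -/
def pact (g : SL(2, F)) :
    Projectivization F (Fin 2 → F) → Projectivization F (Fin 2 → F) :=
  Projectivization.map (Matrix.mulVecLin (g : Matrix (Fin 2) (Fin 2) F))
    (by
      have key : ∀ v : Fin 2 → F,
          ((g⁻¹ : SL(2, F)) : Matrix (Fin 2) (Fin 2) F).mulVec
            (((g : Matrix (Fin 2) (Fin 2) F)).mulVec v) = v := by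
        intro v
        rw [Matrix.mulVec_mulVec, ← Matrix.SpecialLinearGroup.coe_mul, inv_mul_cancel g]
        simp
      intro x y hxy
      have h2 := congrArg
        (fun v => ((g⁻¹ : SL(2, F)) : Matrix (Fin 2) (Fin 2) F).mulVec v) hxy
      simp only [Matrix.mulVecLin_apply] at h2
      rwa [key x, key y] at h2)

/-- The point `∞ = [1 : 0]` of the projective line. -/
def pinf (F : Type*) [Field F] : Projectivization F (Fin 2 → F) :=
  Projectivization.mk F ![1, 0] (by
    intro h
    simpa using congrFun h 0)

/-- The point `0 = [0 : 1]` of the projective line. -/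
def pzero (F : Type*) [Field F] : Projectivization F (Fin 2 → F) :=
  Projectivization.mk F ![0, 1] (by
    intro h
    simpa using congrFun h 1)

/-- The `S`-orbit of a point of the projective line, where
`S = {s(a, b) : a² - b² θ = 1}`. -/
def orbS (θ : F) (x : Projectivization F (Fin 2 → F)) : Set (Projectivization F (Fin 2 → F)) :=
  {y | ∃ (a b : F) (h : a ^ 2 - b ^ 2 * θ = 1), y = pact (smat θ a b h) x}

set_option linter.unusedSectionVars false
set_option maxHeartbeats 1000000

lemma two_ne {x y : F} (h : ¬(x = 0 ∧ y = 0)) : ![x, y] ≠ 0 := by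
  intro he
  exact h ⟨by simpa using congrFun he 0, by simpa using congrFun he 1⟩
lemma vec_eta (v : Fin 2 → F) : v = ![v 0, v 1] := by
  funext i; fin_cases i <;> simp
lemma mulVec_two (a b c d x y : F) :
    (!![a, b; c, d]).mulVec ![x, y] = ![a*x + b*y, c*x + d*y] := by
  funext i
  fin_cases i <;> simp [Matrix.mulVec, dotProduct, Fin.sum_univ_two]
lemma smul_two (c x y : F) : c • ![x, y] = ![c*x, c*y] := by
  funext i; fin_cases i <;> simp
lemma mk_eq_of_eq {v w : Fin 2 → F} (hv : v ≠ 0) (hw : w ≠ 0) (h : v = w) :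
    Projectivization.mk F v hv = Projectivization.mk F w hw := by subst h; rfl
lemma smat_coe (θ a b : F) (h : a ^ 2 - b ^ 2 * θ = 1) :
    ((smat θ a b h : SL(2,F)) : Matrix (Fin 2) (Fin 2) F) = !![a, b; b*θ, a] := rfl
lemma mulVec_sl_ne (g : SL(2,F)) (v : Fin 2 → F) (hv : v ≠ 0) :
    (g : Matrix (Fin 2) (Fin 2) F).mulVec v ≠ 0 := by
  intro h
  apply hv
  have key : ((g⁻¹ : SL(2, F)) : Matrix (Fin 2) (Fin 2) F).mulVec
      (((g : Matrix (Fin 2) (Fin 2) F)).mulVec v) = v := by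
    rw [Matrix.mulVec_mulVec, ← Matrix.SpecialLinearGroup.coe_mul, inv_mul_cancel g]
    simp
  rw [h] at key
  simpa using key.symm
lemma pact_mk (g : SL(2,F)) (v : Fin 2 → F) (hv : v ≠ 0)
    (hv' : (g : Matrix (Fin 2) (Fin 2) F).mulVec v ≠ 0) :
    pact g (Projectivization.mk F v hv) =
      Projectivization.mk F ((g : Matrix (Fin 2) (Fin 2) F).mulVec v) hv' := rfl
lemma ne_inf {θ a b : F} (h : a ^ 2 - b ^ 2 * θ = 1) : ![a, b * θ] ≠ 0 := by
  refine two_ne ?_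
  rintro ⟨rfl, h2⟩
  have : b ^ 2 * θ = 0 := by rw [pow_two, mul_assoc, h2, mul_zero]
  rw [this] at h
  simp at h
lemma ne_zero' {θ a b : F} (h : a ^ 2 - b ^ 2 * θ = 1) : ![b, a] ≠ 0 := by
  refine two_ne ?_
  rintro ⟨rfl, rfl⟩
  simp at h
lemma pact_inf (θ a b : F) (h : a ^ 2 - b ^ 2 * θ = 1) :
    pact (smat θ a b h) (pinf F) = Projectivization.mk F ![a, b * θ] (ne_inf h) := by
  unfold pinf
  rw [pact_mk _ _ _ (mulVec_sl_ne _ _ _)]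
  refine mk_eq_of_eq _ _ ?_
  rw [smat_coe, mulVec_two]
  funext i; fin_cases i <;> simp
  exact two_ne (by simp)
lemma pact_zero (θ a b : F) (h : a ^ 2 - b ^ 2 * θ = 1) :
    pact (smat θ a b h) (pzero F) = Projectivization.mk F ![b, a] (ne_zero' h) := by
  unfold pzero
  rw [pact_mk _ _ _ (mulVec_sl_ne _ _ _)]
  refine mk_eq_of_eq _ _ ?_
  rw [smat_coe, mulVec_two]
  funext i; fin_cases i <;> simp
  exact two_ne (by simp)
lemma mem_orb_inf {θ : F} {p : Projectivization F (Fin 2 → F)} :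
    p ∈ orbS θ (pinf F) ↔
      ∃ (a b : F) (h : a ^ 2 - b ^ 2 * θ = 1),
        p = Projectivization.mk F ![a, b * θ] (ne_inf h) := by
  constructor
  · rintro ⟨a, b, h, rfl⟩
    exact ⟨a, b, h, pact_inf θ a b h⟩
  · rintro ⟨a, b, h, rfl⟩
    exact ⟨a, b, h, (pact_inf θ a b h).symm⟩
lemma mem_orb_zero {θ : F} {p : Projectivization F (Fin 2 → F)} :
    p ∈ orbS θ (pzero F) ↔
      ∃ (a b : F) (h : a ^ 2 - b ^ 2 * θ = 1),
        p = Projectivization.mk F ![b, a] (ne_zero' h) := by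
  constructor
  · rintro ⟨a, b, h, rfl⟩
    exact ⟨a, b, h, pact_zero θ a b h⟩
  · rintro ⟨a, b, h, rfl⟩
    exact ⟨a, b, h, (pact_zero θ a b h).symm⟩

-- ### new chunk

lemma union_eq (θ : F) (hθ0 : θ ≠ 0) (hns : ¬ IsSquare θ) (hn1 : IsSquare (-1 : F))
    (hdich : ∀ d : F, d ≠ 0 → IsSquare d ∨ IsSquare (θ * d)) :
    orbS θ (pinf F) ∪ orbS θ (pzero F) = Set.univ := by
  ext p
  simp only [Set.mem_union, Set.mem_univ, iff_true]
  induction p using Projectivization.ind with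
  | h v hv =>
  have hvne : (![v 0, v 1] : Fin 2 → F) ≠ 0 := (vec_eta v) ▸ hv
  have hp : Projectivization.mk F v hv = Projectivization.mk F ![v 0, v 1] hvne :=
    mk_eq_of_eq _ _ (vec_eta v)
  set x := v 0
  set y := v 1
  have hD : y ^ 2 - x ^ 2 * θ ≠ 0 := by
    intro h0
    by_cases hx0 : x = 0
    · have hy0 : y = 0 := by
        have : y ^ 2 = 0 := by rw [hx0] at h0; simpa using h0
        exact pow_eq_zero_iff (n := 2) (by norm_num) |>.mp this
      exact hvne (by rw [hx0, hy0]; exact funext fun i => by fin_cases i <;> simp)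
    · exact hns ⟨y / x, by field_simp; linear_combination -h0⟩
  rcases hdich _ hD with ⟨e, he⟩ | ⟨e, he⟩
  · -- y² - x²θ = e·e : in orbit of 0
    have he0 : e ≠ 0 := by
      rintro rfl
      rw [mul_zero] at he
      exact hD he
    right
    refine mem_orb_zero.mpr ⟨y / e, x / e, by field_simp; linear_combination he, ?_⟩
    rw [hp]
    refine (Projectivization.mk_eq_mk_iff' F _ _ _ _).mpr ⟨e, ?_⟩
    rw [smul_two]
    funext i; fin_cases i <;> (simp; field_simp) <;> rfl
  · -- θ(y² - x²θ) = e·e : in orbit of ∞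
    have he0 : e ≠ 0 := by
      rintro rfl
      rw [mul_zero] at he
      exact (mul_ne_zero hθ0 hD) he
    obtain ⟨f, hf⟩ := hn1
    have hf0 : f ≠ 0 := by
      rintro rfl
      rw [mul_zero] at hf
      exact one_ne_zero (neg_eq_zero.mp hf)
    left
    refine mem_orb_inf.mpr ⟨x * θ / (f * e), y / (f * e),
      by field_simp; linear_combination (y^2*θ - x^2*θ^2) * hf + f*f*he, ?_⟩
    rw [hp]
    refine (Projectivization.mk_eq_mk_iff' F _ _ _ _).mpr ⟨f * e / θ, ?_⟩
    rw [smul_two]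
    funext i; fin_cases i <;> (simp; field_simp; ring)

lemma disj (θ : F) (hns : ¬IsSquare θ) (hn1 : IsSquare (-1 : F)) :
    Disjoint (orbS θ (pinf F)) (orbS θ (pzero F)) := by
  rw [Set.disjoint_left]
  rintro p h1 h2
  obtain ⟨a, b, h, rfl⟩ := mem_orb_inf.mp h1
  obtain ⟨a', b', h', heq⟩ := mem_orb_zero.mp h2
  obtain ⟨c, hc⟩ := (Projectivization.mk_eq_mk_iff' F _ _ _ _).mp heq
  rw [smul_two] at hc
  have e0 : c * b' = a := by simpa using congrFun hc 0
  have e1 : c * a' = b * θ := by simpa using congrFun hc 1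
  obtain ⟨f, hf⟩ := hn1
  apply hns
  have key : θ = -(c * c) := by
    linear_combination (-θ) * h - c * c * h' - θ * (a + c * b') * e0 + (b * θ + c * a') * e1
  exact ⟨f * c, by linear_combination key + c * c * hf⟩

lemma inf_mem (θ : F) : pinf F ∈ orbS θ (pinf F) := by
  refine ⟨1, 0, by ring, ?_⟩
  rw [pact_inf]
  unfold pinf
  exact mk_eq_of_eq _ _ (funext fun i => by fin_cases i <;> simp)

lemma card_orbs_eq (θ : F) (hθ0 : θ ≠ 0) :
    (orbS θ (pinf F)).ncard = (orbS θ (pzero F)).ncard := by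
  have hinj : Function.Injective
      ((Matrix.mulVecLin (!![0, 1; θ, 0] : Matrix (Fin 2) (Fin 2) F)) : (Fin 2 → F) → (Fin 2 → F)) := by
    intro u w huw
    have h0 := congrFun huw 0
    have h1 := congrFun huw 1
    simp [Matrix.mulVecLin_apply, Matrix.mulVec, dotProduct, Fin.sum_univ_two] at h0 h1
    funext i
    fin_cases i
    · exact mul_left_cancel₀ hθ0 (by simpa using h1)
    · simpa using h0
  have hσinj : Function.Injective
      (Projectivization.map (Matrix.mulVecLin (!![0, 1; θ, 0] : Matrix (Fin 2) (Fin 2) F)) hinj) :=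
    Projectivization.map_injective _ hinj
  have hcomp : ∀ (a b : F) (hab : a ^ 2 - b ^ 2 * θ = 1),
      Projectivization.map (Matrix.mulVecLin (!![0, 1; θ, 0] : Matrix (Fin 2) (Fin 2) F)) hinj
        (Projectivization.mk F ![a, b * θ] (ne_inf hab))
        = Projectivization.mk F ![b, a] (ne_zero' hab) := by
    intro a b hab
    rw [Projectivization.map_mk]
    have hveq : (Matrix.mulVecLin (!![0, 1; θ, 0] : Matrix (Fin 2) (Fin 2) F)) ![a, b * θ]
        = ![b * θ, θ * a] := by
      rw [Matrix.mulVecLin_apply, mulVec_two]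
      funext i; fin_cases i <;> simp
    have hne2 : (![b * θ, θ * a] : Fin 2 → F) ≠ 0 := by
      refine two_ne ?_
      rintro ⟨h1, h2⟩
      have ha : a = 0 := by
        rcases mul_eq_zero.mp h2 with h | h
        · exact absurd h hθ0
        · exact h
      have hbt : b ^ 2 * θ = 0 := by rw [pow_two, mul_assoc, h1, mul_zero]
      rw [ha, hbt] at hab
      simp at hab
    rw [mk_eq_of_eq _ hne2 hveq]
    refine (Projectivization.mk_eq_mk_iff' F _ _ _ _).mpr ⟨θ, ?_⟩
    rw [smul_two]
    funext i; fin_cases i <;> simp <;> ring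
  have himg : (Projectivization.map (Matrix.mulVecLin (!![0, 1; θ, 0] : Matrix (Fin 2) (Fin 2) F)) hinj)
      '' orbS θ (pinf F) = orbS θ (pzero F) := by
    ext q
    constructor
    · rintro ⟨p, hp, rfl⟩
      obtain ⟨a, b, hab, rfl⟩ := mem_orb_inf.mp hp
      exact mem_orb_zero.mpr ⟨a, b, hab, hcomp a b hab⟩
    · intro hq
      obtain ⟨a, b, hab, rfl⟩ := mem_orb_zero.mp hq
      exact ⟨_, mem_orb_inf.mpr ⟨a, b, hab, rfl⟩, hcomp a b hab⟩
  rw [← himg, Set.ncard_image_of_injective _ hσinj]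

lemma finiteP1 [Finite F] : Finite (Projectivization F (Fin 2 → F)) := by
  have : Finite {v : Fin 2 → F // v ≠ 0} := Subtype.finite
  exact Finite.of_surjective (fun v : {v : Fin 2 → F // v ≠ 0} => Projectivization.mk F v.1 v.2)
    (fun p => by induction p using Projectivization.ind with
      | h v hv => exact ⟨⟨v, hv⟩, rfl⟩)

lemma card_P1 [Fintype F] : Nat.card (Projectivization F (Fin 2 → F)) = Fintype.card F + 1 := by
  classical
  have hbij : Function.Bijective (fun o : Option F =>
      Option.elim o (pinf F) (fun x => Projectivization.mk F ![x, 1] (two_ne (by simp)))) := by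
    constructor
    · intro o1 o2 hfe
      match o1, o2 with
      | none, none => rfl
      | none, some x =>
        exfalso
        obtain ⟨c, hc⟩ := (Projectivization.mk_eq_mk_iff' F _ _ _ _).mp hfe
        rw [smul_two] at hc
        have h1 : c * 1 = 0 := by simpa using congrFun hc 1
        have h0 : c * x = 1 := by simpa using congrFun hc 0
        rw [mul_one] at h1
        rw [h1, zero_mul] at h0
        exact zero_ne_one h0
      | some x, none =>
        exfalso
        obtain ⟨c, hc⟩ := (Projectivization.mk_eq_mk_iff' F _ _ _ _).mp hfe
        rw [smul_two] at hc
        have h1 : c * 0 = 1 := by simpa using congrFun hc 1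
        rw [mul_zero] at h1
        exact zero_ne_one h1
      | some x, some y =>
        obtain ⟨c, hc⟩ := (Projectivization.mk_eq_mk_iff' F _ _ _ _).mp hfe
        rw [smul_two] at hc
        have h1 : c * 1 = 1 := by simpa using congrFun hc 1
        have h0 : c * y = x := by simpa using congrFun hc 0
        rw [mul_one] at h1
        rw [h1, one_mul] at h0
        exact congrArg some h0.symm
    · intro p
      induction p using Projectivization.ind with
      | h v hv =>
      have hvne : (![v 0, v 1] : Fin 2 → F) ≠ 0 := (vec_eta v) ▸ hv
      have hp : Projectivization.mk F v hv = Projectivization.mk F ![v 0, v 1] hvne :=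
        mk_eq_of_eq _ _ (vec_eta v)
      by_cases hy : v 1 = 0
      · refine ⟨none, ?_⟩
        have hx : v 0 ≠ 0 := by
          intro hx
          exact hvne (funext fun i => by fin_cases i <;> simp [hx, hy])
        rw [hp]
        refine (Projectivization.mk_eq_mk_iff' F _ _ _ _).mpr ⟨(v 0)⁻¹, ?_⟩
        rw [smul_two]
        funext i; fin_cases i <;> simp [hy, inv_mul_cancel₀ hx]
      · refine ⟨some (v 0 / v 1), ?_⟩
        rw [hp]
        refine ((Projectivization.mk_eq_mk_iff' F _ _ _ _).mpr ⟨v 1, ?_⟩).symm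
        rw [smul_two]
        funext i; fin_cases i <;> simp <;> field_simp
  calc Nat.card (Projectivization F (Fin 2 → F)) = Nat.card (Option F) :=
        (Nat.card_eq_of_bijective _ hbij).symm
    _ = Fintype.card F + 1 := by simp [Nat.card_eq_fintype_card]

lemma center_b0 (θ a : F) (h : a ^ 2 - (0:F) ^ 2 * θ = 1) :
    smat θ a 0 h ∈ Subgroup.center (SL(2, F)) := by
  rw [Subgroup.mem_center_iff]
  intro g
  apply Subtype.ext
  rw [Matrix.SpecialLinearGroup.coe_mul, Matrix.SpecialLinearGroup.coe_mul, smat_coe]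
  ext i j
  fin_cases i <;> fin_cases j <;>
    simp [Matrix.mul_apply, Fin.sum_univ_two] <;> ring



lemma zpow_sq_iff (θ : Fˣ) (hord : Even (orderOf θ)) (hθ : ∀ x : Fˣ, x ∈ Subgroup.zpowers θ)
    (n : ℤ) : IsSquare (θ ^ n) ↔ Even n := by
  constructor
  · rintro ⟨v, hv⟩
    obtain ⟨m, hm⟩ := Subgroup.mem_zpowers_iff.mp (hθ v)
    have h1 : θ ^ (n - (m + m)) = 1 := by
      rw [_root_.zpow_sub, _root_.zpow_add, hm, hv]; exact mul_inv_cancel _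
    have h2 : ((orderOf θ : ℤ)) ∣ n - (m + m) := orderOf_dvd_iff_zpow_eq_one.mpr h1
    obtain ⟨t, ht⟩ := hord
    obtain ⟨s, hs⟩ := h2
    refine ⟨m + t * s, ?_⟩
    push_cast [ht] at hs
    linear_combination hs
  · rintro ⟨m, rfl⟩
    exact ⟨θ ^ m, by rw [← _root_.zpow_add]⟩

lemma theta_not_sq (θ : Fˣ) (hord : Even (orderOf θ)) (hθ : ∀ x : Fˣ, x ∈ Subgroup.zpowers θ) :
    ¬ IsSquare ((θ : F)) := by
  rintro ⟨r, hr⟩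
  have hr0 : r ≠ 0 := by
    rintro rfl
    exact θ.ne_zero (by simpa using hr)
  have : IsSquare θ := ⟨Units.mk0 r hr0, Units.ext (by simpa using hr)⟩
  have := (zpow_sq_iff θ hord hθ 1).mp (by simpa using this)
  simpa using this

lemma neg_one_sq' (θ : Fˣ) (t : ℕ) (hord : orderOf θ = 4 * t)
    (hθ : ∀ x : Fˣ, x ∈ Subgroup.zpowers θ) : IsSquare (-1 : F) := by
  obtain ⟨n, hn⟩ := Subgroup.mem_zpowers_iff.mp (hθ (-1))
  have h1 : θ ^ (n + n) = 1 := by rw [_root_.zpow_add, hn]; simp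
  obtain ⟨s, hs⟩ := orderOf_dvd_iff_zpow_eq_one.mpr h1
  have hev : Even n := by
    refine ⟨t * s, ?_⟩
    have h2 : (2 : ℤ) * n = 2 * (t * s + t * s) := by
      push_cast [hord] at hs
      linear_combination hs
    exact mul_left_cancel₀ two_ne_zero h2
  have : IsSquare ((-1 : Fˣ)) := hn ▸ (zpow_sq_iff θ ⟨2*t, by omega⟩ hθ n).mpr hev
  obtain ⟨c, hc⟩ := this
  exact ⟨(c : F), by rw [← Units.val_mul, ← hc]; simp⟩

lemma dichot (θ : Fˣ) (hord : Even (orderOf θ)) (hθ : ∀ x : Fˣ, x ∈ Subgroup.zpowers θ)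
    (d : F) (hd : d ≠ 0) : IsSquare d ∨ IsSquare ((θ : F) * d) := by
  obtain ⟨n, hn⟩ := Subgroup.mem_zpowers_iff.mp (hθ (Units.mk0 d hd))
  by_cases hev : Even n
  · left
    obtain ⟨c, hc⟩ := (zpow_sq_iff θ hord hθ n).mpr hev
    refine ⟨(c : F), ?_⟩
    have : ((θ ^ n : Fˣ) : F) = (c : F) * (c : F) := by rw [hc]; simp
    rw [hn] at this
    simpa using this
  · right
    obtain ⟨c, hc⟩ := (zpow_sq_iff θ hord hθ (1 + n)).mpr (by
      rcases Int.even_or_odd n with h | h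
      · exact absurd h hev
      · obtain ⟨m, hm⟩ := h; exact ⟨m + 1, by omega⟩)
    refine ⟨(c : F), ?_⟩
    have : ((θ ^ (1 + n) : Fˣ) : F) = (c : F) * (c : F) := by rw [hc]; simp
    rw [_root_.zpow_add, zpow_one, hn] at this
    simpa using this


/-- The subgroup `S` of `PSL(2, k)` acts freely on the projective line `PG(1, k)` and has
exactly two orbits on `PG(1, k)`, each of size `(k+1)/2`; moreover the point `∞` is not
contained in the `S`-orbit containing `0`. -/
theorem stmt6 [Fintype F] (k : ℕ) (hcard : Fintype.card F = k) (hk4 : k % 4 = 1)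
    (θ : Fˣ) (hθ : ∀ x : Fˣ, x ∈ Subgroup.zpowers θ) :
    (∀ (a b : F) (h : a ^ 2 - b ^ 2 * (θ : F) = 1),
      pr F (smat (θ : F) a b h) ≠ 1 →
      ∀ x : Projectivization F (Fin 2 → F), pact (smat (θ : F) a b h) x ≠ x) ∧
    (orbS (θ : F) (pinf F)).ncard = (k + 1) / 2 ∧
    (orbS (θ : F) (pzero F)).ncard = (k + 1) / 2 ∧
    orbS (θ : F) (pinf F) ∪ orbS (θ : F) (pzero F) = Set.univ ∧
    pinf F ∉ orbS (θ : F) (pzero F) := by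
  classical
  have hk2 : 1 < k := hcard ▸ Fintype.one_lt_card
  have hk5 : 5 ≤ k := by omega
  have hord : orderOf θ = k - 1 := by
    rw [orderOf_eq_card_of_forall_mem_zpowers hθ, Nat.card_eq_fintype_card, Fintype.card_units, hcard]
  have heven : Even (orderOf θ) := by rw [hord]; exact Nat.even_iff.mpr (by omega)
  have h4t : orderOf θ = 4 * ((k - 1) / 4) := by rw [hord]; omega
  have hns : ¬ IsSquare ((θ : F)) := theta_not_sq θ heven hθ
  have hn1 : IsSquare (-1 : F) := neg_one_sq' θ _ h4t hθ
  have hdich := dichot θ heven hθ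
  have hθ0 : (θ : F) ≠ 0 := θ.ne_zero
  have huni := union_eq (θ : F) hθ0 hns hn1 hdich
  have hdisj := disj (θ : F) hns hn1
  have hcards : (orbS (θ : F) (pinf F)).ncard = (orbS (θ : F) (pzero F)).ncard :=
    card_orbs_eq _ hθ0
  have hfinP : Finite (Projectivization F (Fin 2 → F)) := finiteP1
  have hsum : (orbS (θ : F) (pinf F)).ncard + (orbS (θ : F) (pzero F)).ncard = k + 1 := by
    rw [← Set.ncard_union_eq hdisj (Set.toFinite _) (Set.toFinite _), huni, Set.ncard_univ,
      card_P1, hcard]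
  have hhalf : (orbS (θ : F) (pinf F)).ncard = (k + 1) / 2 := by omega
  refine ⟨?_, hhalf, by omega, huni,
    fun hmem => Set.disjoint_left.mp hdisj (inf_mem _) hmem⟩
  intro a b h hne1 x hfix
  induction x using Projectivization.ind with
  | h v hv =>
  rw [pact_mk _ v hv (mulVec_sl_ne _ v hv)] at hfix
  obtain ⟨c, hc⟩ := (Projectivization.mk_eq_mk_iff F _ _ _ _).mp hfix
  have hM : ((smat (θ : F) a b h : SL(2, F)) : Matrix (Fin 2) (Fin 2) F).mulVec v
      = ![a * v 0 + b * v 1, b * (θ : F) * v 0 + a * v 1] := by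
    rw [smat_coe]
    conv_lhs => rw [vec_eta v]
    rw [mulVec_two]
  rw [hM] at hc
  have e0 : (c : F) * v 0 = a * v 0 + b * v 1 := by
    have := congrFun hc 0
    simpa [Units.smul_def] using this
  have e1 : (c : F) * v 1 = b * (θ : F) * v 0 + a * v 1 := by
    have := congrFun hc 1
    simpa [Units.smul_def] using this
  by_cases hb : b = 0
  · subst hb
    apply hne1
    have hc0 := center_b0 (θ : F) a h
    rw [← QuotientGroup.ker_mk' (Subgroup.center (SL(2, F)))] at hc0
    exact hc0
  · by_cases hx0 : v 0 = 0
    · have hy0 : v 1 = 0 := by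
        rw [hx0] at e0
        simp only [mul_zero, zero_add] at e0
        rcases mul_eq_zero.mp e0.symm with hh | hh
        · exact absurd hh hb
        · exact hh
      exact hv (funext fun i => by fin_cases i <;> simp [hx0, hy0])
    · by_cases hy0 : v 1 = 0
      · rw [hy0] at e1
        simp only [mul_zero, add_zero] at e1
        rcases mul_eq_zero.mp e1.symm with hh | hh
        · rcases mul_eq_zero.mp hh with hh2 | hh2
          · exact hb hh2
          · exact hθ0 hh2
        · exact hx0 hh
      · apply hns
        have h1 : b * v 1 = ((c : F) - a) * v 0 := by linear_combination -e0
        have h2 : b * (θ : F) * v 0 = ((c : F) - a) * v 1 := by linear_combination -e1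
        have h3 : (θ : F) * b ^ 2 * (v 0 * v 1) = ((c : F) - a) ^ 2 * (v 0 * v 1) := by
          linear_combination (b * (θ : F) * v 0) * h1 + (((c : F) - a) * v 0) * h2
        have h4 : (θ : F) * b ^ 2 = ((c : F) - a) ^ 2 :=
          mul_right_cancel₀ (mul_ne_zero hx0 hy0) h3
        exact ⟨((c : F) - a) / b, by field_simp; linear_combination h4⟩

end Paper6
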